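/- Let K be a field with discrete valuation v and let n ≥ 1, c_0,…,c_{n-1} ∈ K with v(c_b) ≥ 0, defining the number frieze recurrence with solution g (assumed to exist, i.e. all g(a,b) with a ≤ n-2 are nonzero where used as denominators). Then for any positive integer N and any N-perturbation g' of this recurrence and any (a,b) ∈ S with projected precision loss r_{(a,b)}(g') < N, one has v(g'(a,b) - g(a,b)) ≥ N - r_{(a,b)}(g'), and in particular v(g'(a,b)) ≥ 0. -/

import Mathlib

section Stmt19Aux

variable {K : Type*} [Field K] (v : AddValuation K (WithTop ℤ))

lemma vadd19 {t : WithTop ℤ} {x y : K} (hx : t ≤ v x) (hy : t ≤ v y) : t ≤ v (x + y) :=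
  le_trans (le_min hx hy) (v.map_add x y)

lemma vsub19 {t : WithTop ℤ} {x y : K} (hx : t ≤ v x) (hy : t ≤ v y) : t ≤ v (x - y) :=
  le_trans (le_min hx hy) (v.map_sub x y)

lemma vunit19 {e : K} (h : 0 < v e) : v (1 + e) = 0 := by
  have := v.map_add_eq_of_lt_left (x := (1:K)) (y := e) (by simpa using h)
  simpa using this

lemma vHU19 {t : WithTop ℤ} (ht : 0 ≤ t) {a b : K} (ha : t ≤ v a) (hb : t ≤ v b) :
    t ≤ v ((1 + a) * (1 + b) - 1) := by
  have h : (1 + a) * (1 + b) - 1 = (a + b) + a * b := by ring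
  rw [h]
  refine vadd19 v (vadd19 v ha hb) ?_
  rw [v.map_mul]
  calc t = t + 0 := (add_zero t).symm
    _ ≤ v a + v b := add_le_add ha (le_trans ht hb)

/-- linear (continuant) recurrence -/
lemma lin19 (n : ℕ) (c : ℕ → K) (g : ℕ → ℕ → K)
    (h0 : ∀ b ≤ n, g 0 b = 1)
    (h1 : ∀ b ≤ n - 1, g 1 b = c b)
    (hrec : ∀ a b, 2 ≤ a → a ≤ n → b ≤ n - a →
        g (a-2) (b+1) ≠ 0 ∧
        g a b = (g (a-1) b * g (a-1) (b+1) - 1) / g (a-2) (b+1)) :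
    ∀ k b, k + 2 ≤ n → b ≤ n - (k+2) → g (k+2) b = c b * g (k+1) (b+1) - g k (b+2) := by
  intro k
  induction k with
  | zero =>
    intro b hn hb
    obtain ⟨hne, heq⟩ := hrec 2 b (by omega) hn hb
    simp only [show (2:ℕ)-2 = 0 from rfl, show (2:ℕ)-1 = 1 from rfl] at hne heq
    rw [h0 (b+1) (by omega)] at heq
    rw [heq, h1 b (by omega), h1 (b+1) (by omega), h0 (b+2) (by omega), div_one]
  | succ m ih =>
    intro b hn hb
    simp only [show m+1+2 = m+3 from rfl, show m+1+1 = m+2 from rfl]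
    obtain ⟨hne3, heq3⟩ := hrec (m+3) b (by omega) (by omega) (by omega)
    simp only [show m+3-2 = m+1 from rfl, show m+3-1 = m+2 from rfl] at hne3 heq3
    obtain ⟨hne', heq'⟩ := hrec (m+2) (b+1) (by omega) (by omega) (by omega)
    simp only [show m+2-2 = m from rfl, show m+2-1 = m+1 from rfl] at hne' heq'
    have e3 : g (m+3) b * g (m+1) (b+1) = g (m+2) b * g (m+2) (b+1) - 1 := by
      rw [heq3]; exact div_mul_cancel₀ _ hne3
    have e' : g (m+2) (b+1) * g m (b+2) = g (m+1) (b+1) * g (m+1) (b+2) - 1 := by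
      rw [heq']; exact div_mul_cancel₀ _ hne'
    have ihm : g (m+2) b = c b * g (m+1) (b+1) - g m (b+2) := ih b (by omega) (by omega)
    have h2 : (g (m+3) b - (c b * g (m+2) (b+1) - g (m+1) (b+2))) * g (m+1) (b+1) = 0 := by
      linear_combination e3 + g (m+2) (b+1) * ihm - e'
    rcases mul_eq_zero.mp h2 with h | h
    · exact sub_eq_zero.mp h
    · exact absurd h hne3

/-- integrality -/
lemma gint19 (n : ℕ) (hn : 0 < n) (c : ℕ → K) (hc : ∀ b < n, 0 ≤ v (c b)) (g : ℕ → ℕ → K)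
    (h0 : ∀ b ≤ n, g 0 b = 1)
    (h1 : ∀ b ≤ n - 1, g 1 b = c b)
    (hrec : ∀ a b, 2 ≤ a → a ≤ n → b ≤ n - a →
        g (a-2) (b+1) ≠ 0 ∧
        g a b = (g (a-1) b * g (a-1) (b+1) - 1) / g (a-2) (b+1)) :
    ∀ a b, a ≤ n → b ≤ n - a → 0 ≤ v (g a b) := by
  intro a
  induction a using Nat.strong_induction_on with
  | _ a IH =>
    match a with
    | 0 => intro b ha hb; rw [h0 b (by omega)]; simp
    | 1 => intro b ha hb; rw [h1 b (by omega)]; exact hc b (by omega)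
    | (k+2) =>
      intro b ha hb
      rw [lin19 n c g h0 h1 hrec k b ha hb]
      refine vsub19 v ?_ (IH k (by omega) (b+2) (by omega) (by omega))
      rw [v.map_mul]
      have h1' := hc b (by omega)
      have h2' := IH (k+1) (by omega) (b+1) (by omega) (by omega)
      calc (0:WithTop ℤ) = 0 + 0 := by simp
        _ ≤ v (c b) + v (g (k+1) (b+1)) := add_le_add h1' h2'

/-- consecutive entries in a column cannot both be non-units -/
lemma gpair19 (n : ℕ) (hn : 0 < n) (c : ℕ → K) (hc : ∀ b < n, 0 ≤ v (c b)) (g : ℕ → ℕ → K)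
    (h0 : ∀ b ≤ n, g 0 b = 1)
    (h1 : ∀ b ≤ n - 1, g 1 b = c b)
    (hrec : ∀ a b, 2 ≤ a → a ≤ n → b ≤ n - a →
        g (a-2) (b+1) ≠ 0 ∧
        g a b = (g (a-1) b * g (a-1) (b+1) - 1) / g (a-2) (b+1)) :
    ∀ k β, 1 ≤ k → k + 1 ≤ n → β ≤ n - (k+1) →
      v (g k (β+1)) = 0 ∨ v (g (k-1) (β+1)) = 0 := by
  intro k β hk hkn hβ
  match k, hk with
  | 1, _ =>
    right
    rw [show (1:ℕ)-1 = 0 from rfl, h0 (β+1) (by omega)]; simp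
  | (m+2), _ =>
    by_contra hcon
    push_neg at hcon
    obtain ⟨hA, hB⟩ := hcon
    rw [show m+2-1 = m+1 from rfl] at hB
    have gi := gint19 v n hn c hc g h0 h1 hrec
    have hA' : 0 < v (g (m+2) (β+1)) :=
      lt_of_le_of_ne (gi (m+2) (β+1) (by omega) (by omega)) (Ne.symm hA)
    have hB' : 0 < v (g (m+1) (β+1)) :=
      lt_of_le_of_ne (gi (m+1) (β+1) (by omega) (by omega)) (Ne.symm hB)
    obtain ⟨hne, heq⟩ := hrec (m+3) β (by omega) (by omega) (by omega)
    simp only [show m+3-2 = m+1 from rfl, show m+3-1 = m+2 from rfl] at hne heq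
    have E : g (m+3) β * g (m+1) (β+1) = g (m+2) β * g (m+2) (β+1) - 1 := by
      rw [heq]; exact div_mul_cancel₀ _ hne
    have hprod : 0 < v (g (m+2) β * g (m+2) (β+1)) := by
      rw [v.map_mul]
      calc (0:WithTop ℤ) < v (g (m+2) (β+1)) := hA'
        _ = 0 + v (g (m+2) (β+1)) := (zero_add _).symm
        _ ≤ v (g (m+2) β) + v (g (m+2) (β+1)) :=
          add_le_add_left (gi (m+2) β (by omega) (by omega)) _
    have hrhs : v (g (m+2) β * g (m+2) (β+1) - 1) = 0 := by
      have := v.map_sub_eq_of_lt_right (x := g (m+2) β * g (m+2) (β+1)) (y := (1:K))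
        (by simpa using hprod)
      simpa using this
    have hlhs : 0 < v (g (m+3) β * g (m+1) (β+1)) := by
      rw [v.map_mul]
      calc (0:WithTop ℤ) < v (g (m+1) (β+1)) := hB'
        _ = 0 + v (g (m+1) (β+1)) := (zero_add _).symm
        _ ≤ v (g (m+3) β) + v (g (m+1) (β+1)) :=
          add_le_add_left (gi (m+3) β (by omega) (by omega)) _
    rw [E, hrhs] at hlhs
    exact lt_irrefl _ hlhs

end Stmt19Aux

theorem stmt_19 {K : Type*} [Field K] (v : AddValuation K (WithTop ℤ))
    (n : ℕ) (hn : 0 < n) (c : ℕ → K) (hc : ∀ b < n, 0 ≤ v (c b))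
    (g : ℕ → ℕ → K)
    (h0 : ∀ b ≤ n, g 0 b = 1)
    (h1 : ∀ b ≤ n - 1, g 1 b = c b)
    (hrec : ∀ a b, 2 ≤ a → a ≤ n → b ≤ n - a →
        g (a-2) (b+1) ≠ 0 ∧
        g a b = (g (a-1) b * g (a-1) (b+1) - 1) / g (a-2) (b+1))
    (N : ℕ) (hN : 0 < N)
    (g' : ℕ → ℕ → K)
    (hinit : ∀ a b, a ≤ 1 → a ≤ n → b ≤ n - a →
        ∃ ε : K, (N : WithTop ℤ) ≤ v ε ∧ g' a b = g a b * (1 + ε))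
    (hpert : ∀ a b, 2 ≤ a → a ≤ n → b ≤ n - a →
        ∃ ε₁ ε₂ ε₃ : K,
          (N : WithTop ℤ) ≤ v ε₁ ∧ (N : WithTop ℤ) ≤ v ε₂ ∧
          (N : WithTop ℤ) ≤ v ε₃ ∧
          (1 + ε₃) * g' (a-2) (b+1) ≠ 0 ∧
          g' a b = ((1 + ε₁) * g' (a-1) b * g' (a-1) (b+1) - (1 + ε₂)) /
                   ((1 + ε₃) * g' (a-2) (b+1))) :
    ∀ a b, a ≤ n → b ≤ n - a →
      ∀ r : ℤ, 0 ≤ r → r < (N : ℤ) →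
        (∀ a' b', ((a' = a ∧ b' = b) ∨ (a' < a ∧ b ≤ b' ∧ b' ≤ b + (a - a'))) →
            2 ≤ a' → v (g' (a'-2) (b'+1)) ≤ (r : WithTop ℤ)) →
        (((N : ℤ) - r : ℤ) : WithTop ℤ) ≤ v (g' a b - g a b) ∧
        0 ≤ v (g' a b) := by
  have lin := lin19 n c g h0 h1 hrec
  have gi := gint19 v n hn c hc g h0 h1 hrec
  have gp := gpair19 v n hn c hc g h0 h1 hrec
  intro a
  induction a using Nat.strong_induction_on with
  | _ a IH =>
  intro b hab hb r hr0 hrN hcone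
  have hNZ : (((N:ℤ)) : WithTop ℤ) = (N : WithTop ℤ) := by norm_cast
  have hNr_leN : (((N:ℤ) - r : ℤ) : WithTop ℤ) ≤ (N : WithTop ℤ) := by
    exact_mod_cast sub_le_self (N:ℤ) hr0
  have hNr_pos : (0 : WithTop ℤ) < (((N:ℤ) - r : ℤ) : WithTop ℤ) := by
    exact_mod_cast sub_pos.mpr hrN
  have hN_pos : (0 : WithTop ℤ) < (N : WithTop ℤ) := by exact_mod_cast hN
  have hN0 : (0 : WithTop ℤ) ≤ (N : WithTop ℤ) := le_of_lt hN_pos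
  have hNrr : (((N:ℤ) - r : ℤ) : WithTop ℤ) + ((r:ℤ) : WithTop ℤ) = (N : WithTop ℤ) := by
    rw [← WithTop.coe_add, sub_add_cancel, hNZ]
  have IH2 : ∀ a' b', a' < a → b ≤ b' → b' ≤ b + (a - a') → a' ≤ n → b' ≤ n - a' →
      (((N:ℤ) - r : ℤ) : WithTop ℤ) ≤ v (g' a' b' - g a' b') ∧ 0 ≤ v (g' a' b') := by
    intro a' b' h1' h2' h3' h4' h5'
    refine IH a' h1' b' h4' h5' r hr0 hrN ?_
    intro a'' b'' hcc h2c
    refine hcone a'' b'' ?_ h2c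
    rcases hcc with ⟨rfl, rfl⟩ | ⟨u1, u2, u3⟩
    · omega
    · omega
  have hval0 : ∀ m β, m < a → b ≤ β → β ≤ b + (a - m) → m ≤ n → β ≤ n - m →
      v (g m β) = 0 → v (g' m β) = 0 := by
    intro m β u1 u2 u3 u4 u5 hg0
    obtain ⟨he, _⟩ := IH2 m β u1 u2 u3 u4 u5
    have hid : g' m β = g m β + (g' m β - g m β) := by ring
    rw [hid, v.map_add_eq_of_lt_left (by rw [hg0]; exact lt_of_lt_of_le hNr_pos he), hg0]
  by_cases ha1 : a ≤ 1
  · obtain ⟨ε, hε, heq⟩ := hinit a b ha1 hab hb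
    have hg0 : 0 ≤ v (g a b) := gi a b hab hb
    have hd : g' a b - g a b = g a b * ε := by rw [heq]; ring
    constructor
    · rw [hd, v.map_mul]
      calc (((N:ℤ) - r : ℤ) : WithTop ℤ) ≤ (N:WithTop ℤ) := hNr_leN
        _ ≤ v ε := hε
        _ = 0 + v ε := (zero_add _).symm
        _ ≤ v (g a b) + v ε := add_le_add_left hg0 _
    · rw [heq, v.map_mul, vunit19 v (lt_of_lt_of_le hN_pos hε)]
      simpa using hg0
  · push_neg at ha1
    obtain ⟨k, rfl⟩ : ∃ k, a = k + 2 := ⟨a - 2, by omega⟩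
    -- base: v (D 0) ≥ N
    have base : (N : WithTop ℤ) ≤ v (g' 2 b - c b * g' 1 (b+1) + g' 0 (b+2)) := by
      obtain ⟨ε₁, ε₂, ε₃, hε₁, hε₂, hε₃, hne, heq⟩ := hpert 2 b (le_refl 2) (by omega) (by omega)
      simp only [show (2:ℕ)-2 = 0 from rfl, show (2:ℕ)-1 = 1 from rfl] at hne heq
      obtain ⟨α, hα, hαe⟩ := hinit 1 b (by omega) (by omega) (by omega)
      obtain ⟨β, hβ, hβe⟩ := hinit 1 (b+1) (by omega) (by omega) (by omega)
      obtain ⟨γ, hγ, hγe⟩ := hinit 0 (b+1) (by omega) (by omega) (by omega)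
      obtain ⟨γ', hγ', hγ'e⟩ := hinit 0 (b+2) (by omega) (by omega) (by omega)
      rw [h1 b (by omega)] at hαe
      rw [h1 (b+1) (by omega)] at hβe
      rw [h0 (b+1) (by omega), one_mul] at hγe
      rw [h0 (b+2) (by omega), one_mul] at hγ'e
      have mul1 : g' 2 b * ((1+ε₃) * g' 0 (b+1)) = (1+ε₁) * g' 1 b * g' 1 (b+1) - (1+ε₂) := by
        rw [heq]; exact div_mul_cancel₀ _ hne
      rw [hαe, hβe, hγe] at mul1
      have idt : (1+ε₃) * (1+γ) * (g' 2 b - c b * g' 1 (b+1) + g' 0 (b+2)) =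
          c b * (c (b+1) * ((1+β) * ((1+ε₁)*(1+α) - (1+ε₃)*(1+γ))))
          + ((1+ε₃)*((1+γ)*(1+γ')) - (1+ε₂)) := by
        rw [hβe, hγ'e]; linear_combination mul1
      have t1 : (N : WithTop ℤ) ≤
          v (c b * (c (b+1) * ((1+β) * ((1+ε₁)*(1+α) - (1+ε₃)*(1+γ))))) := by
        rw [v.map_mul, v.map_mul, v.map_mul,
          vunit19 v (lt_of_lt_of_le hN_pos hβ), zero_add]
        have hdiff : (N : WithTop ℤ) ≤ v ((1+ε₁)*(1+α) - (1+ε₃)*(1+γ)) := by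
          rw [show (1+ε₁)*(1+α) - (1+ε₃)*(1+γ)
              = ((1+ε₁)*(1+α) - 1) - ((1+ε₃)*(1+γ) - 1) from by ring]
          exact vsub19 v (vHU19 v hN0 hε₁ hα) (vHU19 v hN0 hε₃ hγ)
        calc (N : WithTop ℤ) = 0 + (0 + (N:WithTop ℤ)) := by simp
          _ ≤ v (c b) + (v (c (b+1)) + v ((1+ε₁)*(1+α) - (1+ε₃)*(1+γ))) :=
            add_le_add (hc b (by omega)) (add_le_add (hc (b+1) (by omega)) hdiff)
      have t2 : (N : WithTop ℤ) ≤ v ((1+ε₃)*((1+γ)*(1+γ')) - (1+ε₂)) := by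
        have hs : (N : WithTop ℤ) ≤ v ((1+γ)*(1+γ') - 1) := vHU19 v hN0 hγ hγ'
        rw [show (1+ε₃)*((1+γ)*(1+γ')) - (1+ε₂)
            = ((1+ε₃)*(1 + ((1+γ)*(1+γ') - 1)) - 1) - ε₂ from by ring]
        exact vsub19 v (vHU19 v hN0 hε₃ hs) hε₂
      have hres := vadd19 v t1 t2
      rw [← idt, v.map_mul, v.map_mul, vunit19 v (lt_of_lt_of_le hN_pos hε₃),
        vunit19 v (lt_of_lt_of_le hN_pos hγ), add_zero, zero_add] at hres
      exact hres
    -- key identity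
    have key : ∀ m, m + 3 ≤ k + 2 →
        (N : WithTop ℤ) ≤ v
          (g' (m+1) (b+1) * (g' (m+3) b - c b * g' (m+2) (b+1) + g' (m+1) (b+2))
           - g' (m+2) (b+1) * (g' (m+2) b - c b * g' (m+1) (b+1) + g' m (b+2))) := by
      intro m hm
      obtain ⟨ε₁, ε₂, ε₃, hε₁, hε₂, hε₃, hne, heq⟩ :=
        hpert (m+3) b (by omega) (by omega) (by omega)
      simp only [show m+3-2 = m+1 from rfl, show m+3-1 = m+2 from rfl] at hne heq
      obtain ⟨δ₁, δ₂, δ₃, hδ₁, hδ₂, hδ₃, hne2, heq2⟩ :=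
        hpert (m+2) (b+1) (by omega) (by omega) (by omega)
      simp only [show m+2-2 = m from rfl, show m+2-1 = m+1 from rfl,
        show b+1+1 = b+2 from rfl] at hne2 heq2
      have mul1 : g' (m+3) b * ((1+ε₃) * g' (m+1) (b+1))
          = (1+ε₁) * g' (m+2) b * g' (m+2) (b+1) - (1+ε₂) := by
        rw [heq]; exact div_mul_cancel₀ _ hne
      have mul2 : g' (m+2) (b+1) * ((1+δ₃) * g' m (b+2))
          = (1+δ₁) * g' (m+1) (b+1) * g' (m+1) (b+2) - (1+δ₂) := by
        rw [heq2]; exact div_mul_cancel₀ _ hne2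
      have hx : 0 ≤ v (g' (m+2) b) :=
        (IH2 (m+2) b (by omega) le_rfl (by omega) (by omega) (by omega)).2
      have hy : 0 ≤ v (g' (m+2) (b+1)) :=
        (IH2 (m+2) (b+1) (by omega) (by omega) (by omega) (by omega) (by omega)).2
      have hu : 0 ≤ v (g' m (b+2)) :=
        (IH2 m (b+2) (by omega) (by omega) (by omega) (by omega) (by omega)).2
      have idt : (1+ε₃) * (1+δ₁) *
          (g' (m+1) (b+1) * (g' (m+3) b - c b * g' (m+2) (b+1) + g' (m+1) (b+2))
           - g' (m+2) (b+1) * (g' (m+2) b - c b * g' (m+1) (b+1) + g' m (b+2))) =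
          g' (m+2) b * g' (m+2) (b+1) * ((1+δ₁) * (ε₁ - ε₃))
          + g' m (b+2) * g' (m+2) (b+1) * ((1+ε₃) * (δ₃ - δ₁))
          + ((1+ε₃)*(1+δ₂) - (1+δ₁)*(1+ε₂)) := by
        linear_combination (1+δ₁) * mul1 - (1+ε₃) * mul2
      have t1 : (N : WithTop ℤ) ≤ v (g' (m+2) b * g' (m+2) (b+1) * ((1+δ₁) * (ε₁ - ε₃))) := by
        rw [v.map_mul, v.map_mul, v.map_mul (1+δ₁),
          vunit19 v (lt_of_lt_of_le hN_pos hδ₁), zero_add]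
        calc (N : WithTop ℤ) = (0 + 0) + (N:WithTop ℤ) := by simp
          _ ≤ (v (g' (m+2) b) + v (g' (m+2) (b+1))) + v (ε₁ - ε₃) :=
            add_le_add (add_le_add hx hy) (vsub19 v hε₁ hε₃)
      have t2 : (N : WithTop ℤ) ≤ v (g' m (b+2) * g' (m+2) (b+1) * ((1+ε₃) * (δ₃ - δ₁))) := by
        rw [v.map_mul, v.map_mul, v.map_mul (1+ε₃),
          vunit19 v (lt_of_lt_of_le hN_pos hε₃), zero_add]
        calc (N : WithTop ℤ) = (0 + 0) + (N:WithTop ℤ) := by simp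
          _ ≤ (v (g' m (b+2)) + v (g' (m+2) (b+1))) + v (δ₃ - δ₁) :=
            add_le_add (add_le_add hu hy) (vsub19 v hδ₃ hδ₁)
      have t3 : (N : WithTop ℤ) ≤ v ((1+ε₃)*(1+δ₂) - (1+δ₁)*(1+ε₂)) := by
        rw [show (1+ε₃)*(1+δ₂) - (1+δ₁)*(1+ε₂)
            = ((1+ε₃)*(1+δ₂) - 1) - ((1+δ₁)*(1+ε₂) - 1) from by ring]
        exact vsub19 v (vHU19 v hN0 hε₃ hδ₂) (vHU19 v hN0 hδ₁ hε₂)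
      have hres := vadd19 v (vadd19 v t1 t2) t3
      rw [← idt, v.map_mul, v.map_mul, vunit19 v (lt_of_lt_of_le hN_pos hε₃),
        vunit19 v (lt_of_lt_of_le hN_pos hδ₁), add_zero, zero_add] at hres
      exact hres
    -- chain
    have chain : ∀ m, m + 3 ≤ k + 2 →
        (((N:ℤ) - r : ℤ) : WithTop ℤ) + v (g' (m+1) (b+1)) ≤
          v (g' (m+2) b - c b * g' (m+1) (b+1) + g' m (b+2)) := by
      intro m
      induction m with
      | zero =>
        intro hm
        have hz : v (g' 1 (b+1)) ≤ ((r:ℤ) : WithTop ℤ) := by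
          have := hcone 3 b (by omega) (by omega)
          simpa using this
        calc (((N:ℤ) - r : ℤ) : WithTop ℤ) + v (g' (0+1) (b+1))
            ≤ (((N:ℤ) - r : ℤ) : WithTop ℤ) + ((r:ℤ):WithTop ℤ) := add_le_add_right hz _
          _ = (N : WithTop ℤ) := hNrr
          _ ≤ _ := base
      | succ m ihm =>
        intro hm
        simp only [show m+1+2 = m+3 from rfl, show m+1+1 = m+2 from rfl]
        have hchm := ihm (by omega)
        have hkey := key m (by omega)
        have hzr : v (g' (m+1) (b+1)) ≤ ((r:ℤ) : WithTop ℤ) := by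
          have := hcone (m+3) b (by omega) (by omega)
          simpa only [show m+3-2 = m+1 from rfl] using this
        have hyr : v (g' (m+2) (b+1)) ≤ ((r:ℤ) : WithTop ℤ) := by
          have := hcone (m+4) b (by omega) (by omega)
          simpa only [show m+4-2 = m+2 from rfl] using this
        have hz_ne : v (g' (m+1) (b+1)) ≠ ⊤ :=
          (lt_of_le_of_lt hzr (WithTop.coe_lt_top _)).ne
        have hpair : v (g' (m+1) (b+1)) + v (g' (m+2) (b+1)) ≤ ((r:ℤ) : WithTop ℤ) := by
          rcases gp (m+2) b (by omega) (by omega) (by omega) with h | h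
          · have h0' : v (g' (m+2) (b+1)) = 0 :=
              hval0 (m+2) (b+1) (by omega) (by omega) (by omega) (by omega) (by omega) h
            rw [h0', add_zero]; exact hzr
          · simp only [show m+2-1 = m+1 from rfl] at h
            have h0' : v (g' (m+1) (b+1)) = 0 :=
              hval0 (m+1) (b+1) (by omega) (by omega) (by omega) (by omega) (by omega) h
            rw [h0', zero_add]; exact hyr
        have hmin : min (N : WithTop ℤ)
            (v (g' (m+2) (b+1) * (g' (m+2) b - c b * g' (m+1) (b+1) + g' m (b+2)))) ≤
            v (g' (m+1) (b+1)) + v (g' (m+3) b - c b * g' (m+2) (b+1) + g' (m+1) (b+2)) := by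
          rw [← v.map_mul]
          calc min (N : WithTop ℤ) (v (g' (m+2) (b+1) * _))
              ≤ min (v (g' (m+1) (b+1) * (g' (m+3) b - c b * g' (m+2) (b+1) + g' (m+1) (b+2))
                  - g' (m+2) (b+1) * (g' (m+2) b - c b * g' (m+1) (b+1) + g' m (b+2))))
                (v (g' (m+2) (b+1) * (g' (m+2) b - c b * g' (m+1) (b+1) + g' m (b+2)))) :=
                min_le_min hkey le_rfl
            _ ≤ v ((g' (m+1) (b+1) * (g' (m+3) b - c b * g' (m+2) (b+1) + g' (m+1) (b+2))
                  - g' (m+2) (b+1) * (g' (m+2) b - c b * g' (m+1) (b+1) + g' m (b+2)))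
                + g' (m+2) (b+1) * (g' (m+2) b - c b * g' (m+1) (b+1) + g' m (b+2))) :=
                v.map_add _ _
            _ = _ := by rw [sub_add_cancel]
        have h1 : v (g' (m+1) (b+1)) + ((((N:ℤ) - r : ℤ) : WithTop ℤ) + v (g' (m+2) (b+1)))
            ≤ min (N : WithTop ℤ)
              (v (g' (m+2) (b+1) * (g' (m+2) b - c b * g' (m+1) (b+1) + g' m (b+2)))) := by
          refine le_min ?_ ?_
          · calc v (g' (m+1) (b+1)) + ((((N:ℤ) - r : ℤ) : WithTop ℤ) + v (g' (m+2) (b+1)))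
                = (((N:ℤ) - r : ℤ) : WithTop ℤ) + (v (g' (m+1) (b+1)) + v (g' (m+2) (b+1))) := by
                  abel
              _ ≤ (((N:ℤ) - r : ℤ) : WithTop ℤ) + ((r:ℤ):WithTop ℤ) := add_le_add_right hpair _
              _ = (N : WithTop ℤ) := hNrr
          · calc v (g' (m+1) (b+1)) + ((((N:ℤ) - r : ℤ) : WithTop ℤ) + v (g' (m+2) (b+1)))
                = v (g' (m+2) (b+1)) + ((((N:ℤ) - r : ℤ) : WithTop ℤ) + v (g' (m+1) (b+1))) := by
                  abel
              _ ≤ v (g' (m+2) (b+1)) +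
                  v (g' (m+2) b - c b * g' (m+1) (b+1) + g' m (b+2)) := add_le_add_right hchm _
              _ = v (g' (m+2) (b+1) * (g' (m+2) b - c b * g' (m+1) (b+1) + g' m (b+2))) :=
                  (v.map_mul _ _).symm
        exact (WithTop.add_le_add_iff_left hz_ne).mp (le_trans h1 hmin)
    -- top bound
    have top : (((N:ℤ) - r : ℤ) : WithTop ℤ) ≤
        v (g' (k+2) b - c b * g' (k+1) (b+1) + g' k (b+2)) := by
      rcases k with _ | j
      · exact le_trans hNr_leN base
      · simp only [show j+1+2 = j+3 from rfl, show j+1+1 = j+2 from rfl]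
        have hkey := key j (by omega)
        have hch := chain j (by omega)
        have hy0 : 0 ≤ v (g' (j+2) (b+1)) :=
          (IH2 (j+2) (b+1) (by omega) (by omega) (by omega) (by omega) (by omega)).2
        have hzr : v (g' (j+1) (b+1)) ≤ ((r:ℤ) : WithTop ℤ) := by
          have := hcone (j+3) b (by omega) (by omega)
          simpa only [show j+3-2 = j+1 from rfl] using this
        have hz_ne : v (g' (j+1) (b+1)) ≠ ⊤ :=
          (lt_of_le_of_lt hzr (WithTop.coe_lt_top _)).ne
        have hmin : min (N : WithTop ℤ)
            (v (g' (j+2) (b+1) * (g' (j+2) b - c b * g' (j+1) (b+1) + g' j (b+2)))) ≤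
            v (g' (j+1) (b+1)) + v (g' (j+3) b - c b * g' (j+2) (b+1) + g' (j+1) (b+2)) := by
          rw [← v.map_mul]
          calc min (N : WithTop ℤ) (v (g' (j+2) (b+1) * _))
              ≤ min (v (g' (j+1) (b+1) * (g' (j+3) b - c b * g' (j+2) (b+1) + g' (j+1) (b+2))
                  - g' (j+2) (b+1) * (g' (j+2) b - c b * g' (j+1) (b+1) + g' j (b+2))))
                (v (g' (j+2) (b+1) * (g' (j+2) b - c b * g' (j+1) (b+1) + g' j (b+2)))) :=
                min_le_min hkey le_rfl
            _ ≤ v ((g' (j+1) (b+1) * (g' (j+3) b - c b * g' (j+2) (b+1) + g' (j+1) (b+2))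
                  - g' (j+2) (b+1) * (g' (j+2) b - c b * g' (j+1) (b+1) + g' j (b+2)))
                + g' (j+2) (b+1) * (g' (j+2) b - c b * g' (j+1) (b+1) + g' j (b+2))) :=
                v.map_add _ _
            _ = _ := by rw [sub_add_cancel]
        have h1 : v (g' (j+1) (b+1)) + (((N:ℤ) - r : ℤ) : WithTop ℤ)
            ≤ min (N : WithTop ℤ)
              (v (g' (j+2) (b+1) * (g' (j+2) b - c b * g' (j+1) (b+1) + g' j (b+2)))) := by
          refine le_min ?_ ?_
          · calc v (g' (j+1) (b+1)) + (((N:ℤ) - r : ℤ) : WithTop ℤ)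
                = (((N:ℤ) - r : ℤ) : WithTop ℤ) + v (g' (j+1) (b+1)) := by abel
              _ ≤ (((N:ℤ) - r : ℤ) : WithTop ℤ) + ((r:ℤ):WithTop ℤ) := add_le_add_right hzr _
              _ = (N : WithTop ℤ) := hNrr
          · calc v (g' (j+1) (b+1)) + (((N:ℤ) - r : ℤ) : WithTop ℤ)
                = 0 + ((((N:ℤ) - r : ℤ) : WithTop ℤ) + v (g' (j+1) (b+1))) := by abel
              _ ≤ v (g' (j+2) (b+1)) +
                  v (g' (j+2) b - c b * g' (j+1) (b+1) + g' j (b+2)) := add_le_add hy0 hch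
              _ = v (g' (j+2) (b+1) * (g' (j+2) b - c b * g' (j+1) (b+1) + g' j (b+2))) :=
                  (v.map_mul _ _).symm
        exact (WithTop.add_le_add_iff_left hz_ne).mp (le_trans h1 hmin)
    -- assemble
    have e1 := (IH2 (k+1) (b+1) (by omega) (by omega) (by omega) (by omega) (by omega)).1
    have e2 := (IH2 k (b+2) (by omega) (by omega) (by omega) (by omega) (by omega)).1
    have etop : g' (k+2) b - g (k+2) b =
        ((g' (k+2) b - c b * g' (k+1) (b+1) + g' k (b+2))
          + c b * (g' (k+1) (b+1) - g (k+1) (b+1)))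
        - (g' k (b+2) - g k (b+2)) := by
      rw [lin k b hab hb]; ring
    have hdiff : (((N:ℤ) - r : ℤ) : WithTop ℤ) ≤ v (g' (k+2) b - g (k+2) b) := by
      rw [etop]
      refine vsub19 v (vadd19 v top ?_) e2
      rw [v.map_mul]
      calc (((N:ℤ) - r : ℤ) : WithTop ℤ)
          = 0 + (((N:ℤ) - r : ℤ) : WithTop ℤ) := (zero_add _).symm
        _ ≤ v (c b) + v (g' (k+1) (b+1) - g (k+1) (b+1)) :=
            add_le_add (hc b (by omega)) e1
    refine ⟨hdiff, ?_⟩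
    have hgg : 0 ≤ v (g (k+2) b) := gi (k+2) b hab hb
    have hid : g' (k+2) b = g (k+2) b + (g' (k+2) b - g (k+2) b) := by ring
    rw [hid]
    exact le_trans (le_min hgg (le_trans (le_of_lt hNr_pos) hdiff)) (v.map_add _ _)
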